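/- For every group G and every natural number n, the normalizer of the iterated wreath product W(G,n) in the symmetric group Perm(Gⁿ) is an internal semidirect product M_n ⋉ W(G,n): that is, there exists a subgroup M_n of Perm(Gⁿ) with M_n ∩ W(G,n) = 1, such that the normalizer equals M_n · W(G,n) and W(G,n) is normal in this normalizer; moreover M_n is isomorphic to the direct product Aut(G)ⁿ of n copies of the automorphism group of G. -/

import Mathlib

open Equiv

/-- The block `X_y = X × {y}` inside `Z = X × Y`. -/
def block (X Y : Type*) (y : Y) : Set (X × Y) := {p | p.2 = y}

/-- The subgroup `S_Y(Z)` of all permutations of `Z = X × Y` stabilizing every block `X_y`. -/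
def blockStab (X Y : Type*) : Subgroup (Perm (X × Y)) where
  carrier := {f | ∀ y : Y, f '' block X Y y = block X Y y}
  one_mem' := by intro y; simp
  mul_mem' := by
    intro f g hf hg y
    have hfg : ⇑(f * g) = ⇑f ∘ ⇑g := rfl
    rw [hfg, Set.image_comp, hg y, hf y]
  inv_mem' := by
    intro f hf y
    have h1 : ⇑f '' block X Y y = block X Y y := hf y
    calc ⇑f⁻¹ '' block X Y y = ⇑f⁻¹ '' (⇑f '' block X Y y) := by rw [h1]
      _ = block X Y y := by
          rw [← Set.image_comp]
          have h2 : ⇑f⁻¹ ∘ ⇑f = id := by funext p; simp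
          rw [h2, Set.image_id]

/-- For `h` a permutation of `X` and `y ∈ Y`, the permutation `h_y` of `Z = X × Y`
acting as `h` on the block `X_y` and fixing everything else. -/
noncomputable def fiberPerm (X Y : Type*) (h : Perm X) (y : Y) : Perm (X × Y) :=
  letI := Classical.decEq Y
  { toFun := fun p => if p.2 = y then (h p.1, p.2) else p
    invFun := fun p => if p.2 = y then (h.symm p.1, p.2) else p
    left_inv := fun p => by
      obtain ⟨x, y'⟩ := p
      by_cases hp : y' = y <;> simp [hp]
    right_inv := fun p => by
      obtain ⟨x, y'⟩ := p
      by_cases hp : y' = y <;> simp [hp] }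

lemma fiberPerm_apply_eq (X Y : Type*) (h : Perm X) (y : Y) (x : X) :
    fiberPerm X Y h y (x, y) = (h x, y) := by
  simp [fiberPerm]

lemma fiberPerm_apply_ne (X Y : Type*) (h : Perm X) (y : Y) (p : X × Y) (hp : p.2 ≠ y) :
    fiberPerm X Y h y p = p := by
  simp [fiberPerm, hp]

/-- The homomorphism `h ↦ h_y`. -/
noncomputable def fiberHom (X Y : Type*) (y : Y) : Perm X →* Perm (X × Y) where
  toFun h := fiberPerm X Y h y
  map_one' := by
    refine Equiv.ext fun p => ?_
    by_cases hp : p.2 = y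
    · obtain ⟨x, y'⟩ := p; subst hp; simp [fiberPerm_apply_eq]
    · simp [fiberPerm_apply_ne _ _ _ _ _ hp]
  map_mul' := by
    intro h1 h2
    refine Equiv.ext fun p => ?_
    by_cases hp : p.2 = y
    · obtain ⟨x, y'⟩ := p
      subst hp
      simp [Perm.mul_apply, fiberPerm_apply_eq]
    · simp [Perm.mul_apply, fiberPerm_apply_ne _ _ _ _ _ hp]

/-- The embedding `Λ` of permutations of `Y` into permutations of `Z = X × Y`,
`Λ(k)(x,y) = (x, k(y))`. -/
def lamHom (X Y : Type*) : Perm Y →* Perm (X × Y) where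
  toFun k := (Equiv.refl X).prodCongr k
  map_one' := Equiv.ext fun p => rfl
  map_mul' := fun k1 k2 => Equiv.ext fun p => rfl

lemma lamHom_apply (X Y : Type*) (k : Perm Y) (x : X) (y : Y) :
    lamHom X Y k (x, y) = (x, k y) := rfl

/-- The base group `B` of the wreath product: all permutations of `Z = X × Y`
stabilizing each block `X_y` and restricting to an element of `H_y` on it. -/
def baseGroup (X Y : Type*) (H : Subgroup (Perm X)) : Subgroup (Perm (X × Y)) where
  carrier := {f | ∀ y : Y, ∃ h ∈ H, ∀ x : X, f (x, y) = (h x, y)}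
  one_mem' := fun y => ⟨1, H.one_mem, fun x => rfl⟩
  mul_mem' := by
    rintro f g hf hg y
    obtain ⟨hg', hgH, hgeq⟩ := hg y
    obtain ⟨hf', hfH, hfeq⟩ := hf y
    refine ⟨hf' * hg', H.mul_mem hfH hgH, fun x => ?_⟩
    have : (f * g) (x, y) = f (g (x, y)) := rfl
    rw [this, hgeq x, hfeq (hg' x)]
    rfl
  inv_mem' := by
    rintro f hf y
    obtain ⟨h, hH, heq⟩ := hf y
    refine ⟨h⁻¹, H.inv_mem hH, fun x => ?_⟩
    have h1 : f ((h⁻¹ : Perm X) x, y) = (x, y) := by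
      rw [heq]
      simp
    calc f⁻¹ (x, y) = f⁻¹ (f ((h⁻¹ : Perm X) x, y)) := by rw [h1]
      _ = ((h⁻¹ : Perm X) x, y) := by simp

lemma mem_baseGroup_iff (X Y : Type*) (H : Subgroup (Perm X)) (f : Perm (X × Y)) :
    f ∈ baseGroup X Y H ↔ ∀ y : Y, ∃ h ∈ H, ∀ x : X, f (x, y) = (h x, y) := Iff.rfl

lemma lam_conj_base (X Y : Type*) {H : Subgroup (Perm X)} (k : Perm Y) {b : Perm (X × Y)}
    (hb : b ∈ baseGroup X Y H) : (lamHom X Y k)⁻¹ * b * lamHom X Y k ∈ baseGroup X Y H := by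
  intro y
  obtain ⟨h, hH, heq⟩ := hb (k y)
  refine ⟨h, hH, fun x => ?_⟩
  have h2 : ((lamHom X Y k)⁻¹ : Perm (X × Y)) (h x, k y) = (h x, y) := by
    have h3 : (lamHom X Y k) (h x, y) = (h x, k y) := rfl
    rw [← h3]
    simp
  calc ((lamHom X Y k)⁻¹ * b * lamHom X Y k) (x, y)
      = (lamHom X Y k)⁻¹ (b ((lamHom X Y k) (x, y))) := rfl
    _ = (lamHom X Y k)⁻¹ (b (x, k y)) := rfl
    _ = (lamHom X Y k)⁻¹ (h x, k y) := by rw [heq x]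
    _ = (h x, y) := h2

/-- The unrestricted wreath product `W = H ≀ K ≤ Perm(X × Y)`, namely the
internal product `Λ(K)·B`. -/
def wreath (X Y : Type*) (H : Subgroup (Perm X)) (K : Subgroup (Perm Y)) :
    Subgroup (Perm (X × Y)) where
  carrier := {w | ∃ k ∈ K, ∃ b ∈ baseGroup X Y H, w = lamHom X Y k * b}
  one_mem' := ⟨1, K.one_mem, 1, (baseGroup X Y H).one_mem, by simp⟩
  mul_mem' := by
    rintro w1 w2 ⟨k1, hk1, b1, hb1, rfl⟩ ⟨k2, hk2, b2, hb2, rfl⟩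
    refine ⟨k1 * k2, K.mul_mem hk1 hk2, ((lamHom X Y k2)⁻¹ * b1 * lamHom X Y k2) * b2,
      (baseGroup X Y H).mul_mem (lam_conj_base X Y k2 hb1) hb2, ?_⟩
    rw [map_mul]
    group
  inv_mem' := by
    rintro w ⟨k, hk, b, hb, rfl⟩
    refine ⟨k⁻¹, K.inv_mem hk, (lamHom X Y k⁻¹)⁻¹ * b⁻¹ * lamHom X Y k⁻¹,
      lam_conj_base X Y k⁻¹ ((baseGroup X Y H).inv_mem hb), ?_⟩
    rw [map_inv]
    group

lemma mem_wreath_iff (X Y : Type*) (H : Subgroup (Perm X)) (K : Subgroup (Perm Y))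
    (w : Perm (X × Y)) :
    w ∈ wreath X Y H K ↔ ∃ k ∈ K, ∃ b ∈ baseGroup X Y H, w = lamHom X Y k * b := Iff.rfl

/-- The image of the (right) regular representation of a group `K` in `Perm K`. -/
def rightRegular (K : Type*) [Group K] : Subgroup (Perm K) where
  carrier := Set.range (fun k : K => Equiv.mulRight k)
  one_mem' := ⟨1, by ext x; simp⟩
  mul_mem' := by
    rintro _ _ ⟨a, rfl⟩ ⟨b, rfl⟩
    exact ⟨b * a, by ext x; simp [mul_assoc]⟩
  inv_mem' := by
    rintro _ ⟨a, rfl⟩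
    exact ⟨a⁻¹, by ext x; simp⟩

/-- The homomorphism `Γ : Aut(K) → Perm(X × K)`, `Γ(γ)(x,k) = (x, γ(k))`. -/
def gammaHom (X K : Type*) [Group K] : MulAut K →* Perm (X × K) where
  toFun γ := (Equiv.refl X).prodCongr γ.toEquiv
  map_one' := Equiv.ext fun p => rfl
  map_mul' := fun γ1 γ2 => Equiv.ext fun p => rfl

lemma gammaHom_apply (X K : Type*) [Group K] (γ : MulAut K) (x : X) (k : K) :
    gammaHom X K γ (x, k) = (x, γ k) := rfl

/-- The homomorphism `m ↦ m*` from `Perm X` to `Perm (X × K)`, `m*(x,k) = (m(x), k)`. -/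
def mstarHom (X K : Type*) : Perm X →* Perm (X × K) where
  toFun m := m.prodCongr (Equiv.refl K)
  map_one' := Equiv.ext fun p => rfl
  map_mul' := fun m1 m2 => Equiv.ext fun p => rfl

lemma mstarHom_apply (X K : Type*) (m : Perm X) (x : X) (k : K) :
    mstarHom X K m (x, k) = (m x, k) := rfl
/-- The underlying set `G^n` of the iterated wreath product. -/
def iterSpace (G : Type u) : ℕ → Type u
  | 0 => PUnit
  | n + 1 => iterSpace G n × G

/-- The iterated wreath product `W(G,n) ≤ Perm(G^n)`: `W(G,0)` is trivial and
`W(G,n+1) = W(G,n) ≀ G`, with `G` acting on itself by the regular representation. -/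
def iterW (G : Type u) [Group G] : (n : ℕ) → Subgroup (Perm (iterSpace G n))
  | 0 => ⊥
  | n + 1 => wreath (iterSpace G n) G (iterW G n) (rightRegular G)

theorem Equiv.Perm.inv_apply_self {α : Type*} (f : Perm α) (x : α) : f⁻¹ (f x) = x :=
  f.symm_apply_apply x

theorem Equiv.Perm.apply_inv_self {α : Type*} (f : Perm α) (x : α) : f (f⁻¹ x) = x :=
  f.apply_symm_apply x

section Aux

variable {X : Type*} {Y : Type*} {G : Type*} [Group G]

lemma mem_rightRegular_iff {k : Perm G} :
    k ∈ rightRegular G ↔ ∃ g : G, k = Equiv.mulRight g := by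
  constructor
  · rintro ⟨g, rfl⟩; exact ⟨g, rfl⟩
  · rintro ⟨g, rfl⟩; exact ⟨g, rfl⟩

lemma mem_wreath_of_base {H : Subgroup (Perm X)} (K : Subgroup (Perm Y)) {b : Perm (X × Y)}
    (hb : b ∈ baseGroup X Y H) : b ∈ wreath X Y H K :=
  ⟨1, K.one_mem, b, hb, by rw [map_one, one_mul]⟩

lemma lam_mem_wreath (H : Subgroup (Perm X)) {K : Subgroup (Perm Y)} {k : Perm Y}
    (hk : k ∈ K) : lamHom X Y k ∈ wreath X Y H K :=
  ⟨k, hk, 1, (baseGroup X Y H).one_mem, by rw [mul_one]⟩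

lemma baseGroup_snd {H : Subgroup (Perm X)} {b : Perm (X × Y)}
    (hb : b ∈ baseGroup X Y H) (p : X × Y) : (b p).2 = p.2 := by
  obtain ⟨x, y⟩ := p
  obtain ⟨h, _, he⟩ := hb y
  rw [he x]

lemma fiberPerm_mem_baseGroup {H : Subgroup (Perm X)} {h : Perm X} (hh : h ∈ H) (y : Y) :
    fiberPerm X Y h y ∈ baseGroup X Y H := by
  intro y'
  by_cases hy : y' = y
  · subst hy
    exact ⟨h, hh, fun x => fiberPerm_apply_eq X Y h y' x⟩
  · exact ⟨1, H.one_mem, fun x => by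
      rw [fiberPerm_apply_ne X Y h y (x, y') hy]; rfl⟩

lemma normalizer_conj_mem {Gp : Type*} [Group Gp] {H : Subgroup Gp} :
    ∀ α ∈ (Subgroup.normalizer (H : Set _)), ∀ w ∈ H, α⁻¹ * w * α ∈ H := by
  intro α hα w hw
  have := (Subgroup.mem_normalizer_iff.mp (inv_mem hα) w).mp hw
  rwa [inv_inv] at this

lemma mem_normalizer_of_conj {Gp : Type*} [Group Gp] {H : Subgroup Gp} {s : Gp}
    (h1 : ∀ w ∈ H, s * w * s⁻¹ ∈ H) (h2 : ∀ w ∈ H, s⁻¹ * w * s ∈ H) :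
    s ∈ (Subgroup.normalizer (H : Set _)) := by
  refine Subgroup.mem_normalizer_iff.mpr fun w => ⟨fun hw => h1 w hw, fun hw => ?_⟩
  have := h2 _ hw
  have e : s⁻¹ * (s * w * s⁻¹) * s = w := by group
  rwa [e] at this

/-- An element of the wreath product fixing a point lies in the base group. -/
lemma fix_mem_base {H : Subgroup (Perm X)} {w : Perm (X × G)}
    (hw : w ∈ wreath X G H (rightRegular G)) {p : X × G} (hp : w p = p) :
    w ∈ baseGroup X G H := by
  obtain ⟨k, hk, b, hb, rfl⟩ := hw
  obtain ⟨g, rfl⟩ := mem_rightRegular_iff.mp hk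
  obtain ⟨x, y⟩ := p
  obtain ⟨h, hH, he⟩ := hb y
  have h1 : (lamHom X G (Equiv.mulRight g) * b) (x, y) = (h x, y * g) := by
    rw [Perm.mul_apply, he x, lamHom_apply]
    rfl
  rw [hp] at h1
  have hg : g = 1 := by
    have := congrArg Prod.snd h1
    simp only at this
    exact (left_eq_mul.mp this)
  have hlam : lamHom X G (Equiv.mulRight g) = 1 := by
    rw [hg]
    refine Equiv.ext fun q => ?_
    obtain ⟨x', y'⟩ := q
    rw [lamHom_apply]
    simp
  rw [hlam, one_mul]
  exact hb

/-- Wreath products of transitive groups are transitive. -/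
lemma wreath_trans {H : Subgroup (Perm X)} (htrans : ∀ x x' : X, ∃ h ∈ H, h x = x') :
    ∀ p q : X × G, ∃ w ∈ wreath X G H (rightRegular G), w p = q := by
  rintro ⟨x, y⟩ ⟨x', y'⟩
  obtain ⟨h, hH, hx⟩ := htrans x x'
  refine ⟨fiberPerm X G h y' * lamHom X G (Equiv.mulRight (y⁻¹ * y')),
    mul_mem (mem_wreath_of_base _ (fiberPerm_mem_baseGroup hH y'))
      (lam_mem_wreath _ ⟨y⁻¹ * y', rfl⟩), ?_⟩
  have h1 : lamHom X G (Equiv.mulRight (y⁻¹ * y')) (x, y) = (x, y') := by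
    rw [lamHom_apply]
    show (x, y * (y⁻¹ * y')) = (x, y')
    rw [mul_inv_cancel_left]
  rw [Perm.mul_apply, h1, fiberPerm_apply_eq, hx]

end Aux
section Key

variable {X : Type*} {G : Type*} [Group G]

/-- A normalizing element of the wreath product conjugates the base group into itself. -/
lemma conj_base_mem [Nontrivial G] [Nonempty X] {H : Subgroup (Perm X)}
    {α : Perm (X × G)} (hα : α ∈ (Subgroup.normalizer ((wreath X G H (rightRegular G)) : Set (Perm (X × G)))))
    {b : Perm (X × G)} (hb : b ∈ baseGroup X G H) :
    α * b * α⁻¹ ∈ baseGroup X G H := by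
  obtain ⟨g0, hg0⟩ := exists_ne (1 : G)
  obtain ⟨x0⟩ := ‹Nonempty X›
  obtain ⟨h1, hh1, he1⟩ := hb (1 : G)
  set b1 := fiberPerm X G h1 1 with hb1def
  have hb1 : b1 ∈ baseGroup X G H := fiberPerm_mem_baseGroup hh1 1
  have hb2 : b1⁻¹ * b ∈ baseGroup X G H := mul_mem (inv_mem hb1) hb
  have hfix1 : b1 (x0, g0) = (x0, g0) := fiberPerm_apply_ne X G h1 1 (x0, g0) hg0
  have hfix2 : (b1⁻¹ * b) (x0, 1) = (x0, 1) := by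
    rw [Perm.mul_apply, he1 x0, ← fiberPerm_apply_eq X G h1 1 x0, ← hb1def]
    exact Perm.inv_apply_self b1 _
  have hW := Subgroup.mem_normalizer_iff.mp hα
  have c1mem : α * b1 * α⁻¹ ∈ wreath X G H (rightRegular G) :=
    (hW b1).mp (mem_wreath_of_base _ hb1)
  have c2mem : α * (b1⁻¹ * b) * α⁻¹ ∈ wreath X G H (rightRegular G) :=
    (hW _).mp (mem_wreath_of_base _ hb2)
  have c1fix : (α * b1 * α⁻¹) (α (x0, g0)) = α (x0, g0) := by
    simp [Perm.mul_apply, hfix1]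
  have c2fix : (α * (b1⁻¹ * b) * α⁻¹) (α (x0, 1)) = α (x0, 1) := by
    simp [Perm.mul_apply, hfix2]
  have c1base := fix_mem_base c1mem c1fix
  have c2base := fix_mem_base c2mem c2fix
  have heq : α * b * α⁻¹ = (α * b1 * α⁻¹) * (α * (b1⁻¹ * b) * α⁻¹) := by group
  rw [heq]
  exact mul_mem c1base c2base

/-- The second coordinate of `α (x, y)` does not depend on `x`. -/
lemma snd_indep [Nontrivial G] [Nonempty X] {H : Subgroup (Perm X)}
    (htrans : ∀ x x' : X, ∃ h ∈ H, h x = x')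
    {α : Perm (X × G)} (hα : α ∈ (Subgroup.normalizer ((wreath X G H (rightRegular G)) : Set (Perm (X × G)))))
    (x x' : X) (y : G) : (α (x, y)).2 = (α (x', y)).2 := by
  obtain ⟨h, hH, hx⟩ := htrans x x'
  have hb : fiberPerm X G h y ∈ baseGroup X G H := fiberPerm_mem_baseGroup hH y
  have hc := conj_base_mem hα hb
  have key : (α * fiberPerm X G h y * α⁻¹) (α (x, y)) = α (x', y) := by
    rw [Perm.mul_apply, Perm.mul_apply, Perm.inv_apply_self, fiberPerm_apply_eq, hx]
  have h2 := baseGroup_snd hc (α (x, y))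
  rw [key] at h2
  exact h2.symm

/-- If `β` is normalizing and acts on the block `X_y` (sending it to `X_z`) via the
permutation `E` of `X`, then `E` conjugates `H` into itself. -/
lemma conj_block_normalizes [Nontrivial G] [Nonempty X] {H : Subgroup (Perm X)}
    {β : Perm (X × G)} (hβ : β ∈ (Subgroup.normalizer ((wreath X G H (rightRegular G)) : Set (Perm (X × G)))))
    (E : Perm X) (y z : G) (hE : ∀ x, β (x, y) = (E x, z)) :
    ∀ h ∈ H, E * h * E⁻¹ ∈ H := by
  intro h hh
  have hc := conj_base_mem hβ (fiberPerm_mem_baseGroup hh y)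
  obtain ⟨h', hH', he'⟩ := hc z
  have key : ∀ x : X, E (h x) = h' (E x) := by
    intro x
    have e1 : β⁻¹ (E x, z) = (x, y) := by
      rw [← hE x, Perm.inv_apply_self]
    have e2 : (β * fiberPerm X G h y * β⁻¹) (E x, z) = (E (h x), z) := by
      rw [Perm.mul_apply, Perm.mul_apply, e1, fiberPerm_apply_eq, hE]
    have e3 := he' (E x)
    rw [e2] at e3
    exact (congrArg Prod.fst e3)
  have hEh : E * h * E⁻¹ = h' := by
    refine Equiv.ext fun x' => ?_
    have := key (E⁻¹ x')
    rwa [Perm.apply_inv_self] at this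
  rw [hEh]
  exact hH'

end Key
section Hol

variable {G : Type*} [Group G]

/-- Holomorph: a permutation normalizing the right regular representation is an
automorphism followed by a right translation. -/
lemma normalizer_rightRegular {σ : Perm G}
    (hσ : ∀ g : G, ∃ g' : G, ∀ y : G, σ (y * g) = σ y * g') :
    ∃ γ : MulAut G, ∃ a : G, ∀ y : G, σ y = γ y * a := by
  have key : ∀ z g : G, σ (z * g) = σ z * ((σ 1)⁻¹ * σ g) := by
    intro z g
    obtain ⟨g', hg'⟩ := hσ g
    have h1 := hg' 1
    rw [one_mul] at h1
    rw [hg' z, h1]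
    group
  set τ : Perm G := σ.trans (Equiv.mulRight (σ 1)⁻¹) with hτ
  have hτapp : ∀ y, τ y = σ y * (σ 1)⁻¹ := fun y => rfl
  have hmul : ∀ z g : G, τ (z * g) = τ z * τ g := by
    intro z g
    rw [hτapp, hτapp, hτapp, key z g]
    group
  refine ⟨MulEquiv.mk' τ hmul, σ 1, fun y => ?_⟩
  show σ y = σ y * (σ 1)⁻¹ * σ 1
  group

end Hol

section MstepDef

variable (X : Type*) (G : Type*) [Group G]

lemma gamma_mstar_comm (m : Perm X) (γ : MulAut G) :
    gammaHom X G γ * mstarHom X G m = mstarHom X G m * gammaHom X G γ := by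
  refine Equiv.ext fun p => ?_
  obtain ⟨x, y⟩ := p
  rfl

/-- The complement subgroup at the next level: `{m* Γ(γ)}`. -/
def Mstep (M : Subgroup (Perm X)) : Subgroup (Perm (X × G)) where
  carrier := {f | ∃ m ∈ M, ∃ γ : MulAut G, f = mstarHom X G m * gammaHom X G γ}
  one_mem' := ⟨1, M.one_mem, 1, by rw [map_one, map_one, one_mul]⟩
  mul_mem' := by
    rintro f g ⟨m1, hm1, γ1, rfl⟩ ⟨m2, hm2, γ2, rfl⟩
    refine ⟨m1 * m2, M.mul_mem hm1 hm2, γ1 * γ2, ?_⟩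
    rw [map_mul, map_mul]
    calc mstarHom X G m1 * gammaHom X G γ1 * (mstarHom X G m2 * gammaHom X G γ2)
        = mstarHom X G m1 * (gammaHom X G γ1 * mstarHom X G m2) * gammaHom X G γ2 := by group
      _ = mstarHom X G m1 * (mstarHom X G m2 * gammaHom X G γ1) * gammaHom X G γ2 := by
          rw [gamma_mstar_comm]
      _ = mstarHom X G m1 * mstarHom X G m2 * (gammaHom X G γ1 * gammaHom X G γ2) := by group
  inv_mem' := by
    rintro f ⟨m, hm, γ, rfl⟩
    refine ⟨m⁻¹, M.inv_mem hm, γ⁻¹, ?_⟩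
    rw [mul_inv_rev, ← map_inv, ← map_inv, gamma_mstar_comm]

lemma mem_Mstep_iff (M : Subgroup (Perm X)) (f : Perm (X × G)) :
    f ∈ Mstep X G M ↔ ∃ m ∈ M, ∃ γ : MulAut G, f = mstarHom X G m * gammaHom X G γ :=
  Iff.rfl

end MstepDef

section MstepNorm

variable {X : Type*} {G : Type*} [Group G]

lemma mstar_conj_wreath {H : Subgroup (Perm X)} {m : Perm X} (hm : m ∈ (Subgroup.normalizer (H : Set _)))
    {w : Perm (X × G)} (hw : w ∈ wreath X G H (rightRegular G)) :
    mstarHom X G m * w * (mstarHom X G m)⁻¹ ∈ wreath X G H (rightRegular G) := by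
  obtain ⟨k, hk, b, hb, rfl⟩ := hw
  have hcomm : mstarHom X G m * lamHom X G k = lamHom X G k * mstarHom X G m := by
    refine Equiv.ext fun p => ?_; obtain ⟨x, y⟩ := p; rfl
  have hbase : mstarHom X G m * b * (mstarHom X G m)⁻¹ ∈ baseGroup X G H := by
    intro y
    obtain ⟨h, hH, he⟩ := hb y
    refine ⟨m * h * m⁻¹, (Subgroup.mem_normalizer_iff.mp hm h).mp hH, fun x => ?_⟩
    have e1 : (mstarHom X G m)⁻¹ (x, y) = (m⁻¹ x, y) := by rw [← map_inv]; rfl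
    rw [Perm.mul_apply, Perm.mul_apply, e1, he, mstarHom_apply]
    rfl
  have heq : mstarHom X G m * (lamHom X G k * b) * (mstarHom X G m)⁻¹
      = lamHom X G k * (mstarHom X G m * b * (mstarHom X G m)⁻¹) := by
    calc mstarHom X G m * (lamHom X G k * b) * (mstarHom X G m)⁻¹
        = (mstarHom X G m * lamHom X G k) * (b * (mstarHom X G m)⁻¹) := by group
      _ = (lamHom X G k * mstarHom X G m) * (b * (mstarHom X G m)⁻¹) := by rw [hcomm]
      _ = lamHom X G k * (mstarHom X G m * b * (mstarHom X G m)⁻¹) := by group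
  rw [heq]
  exact ⟨k, hk, _, hbase, rfl⟩

lemma gamma_conj_wreath {H : Subgroup (Perm X)} (γ : MulAut G)
    {w : Perm (X × G)} (hw : w ∈ wreath X G H (rightRegular G)) :
    gammaHom X G γ * w * (gammaHom X G γ)⁻¹ ∈ wreath X G H (rightRegular G) := by
  obtain ⟨k, hk, b, hb, rfl⟩ := hw
  obtain ⟨g, rfl⟩ := mem_rightRegular_iff.mp hk
  have hlam : gammaHom X G γ * lamHom X G (Equiv.mulRight g) * (gammaHom X G γ)⁻¹
      = lamHom X G (Equiv.mulRight (γ g)) := by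
    refine Equiv.ext fun p => ?_
    obtain ⟨x, y⟩ := p
    have e1 : (gammaHom X G γ)⁻¹ (x, y) = (x, (γ⁻¹ : MulAut G) y) := by
      rw [← map_inv]; rfl
    rw [Perm.mul_apply, Perm.mul_apply, e1, lamHom_apply, gammaHom_apply, lamHom_apply]
    show (x, γ ((γ⁻¹ : MulAut G) y * g)) = (x, y * γ g)
    have : γ ((γ⁻¹ : MulAut G) y * g) = y * γ g := by
      rw [map_mul]
      congr 1
      exact γ.apply_symm_apply y
    rw [this]
  have hbase : gammaHom X G γ * b * (gammaHom X G γ)⁻¹ ∈ baseGroup X G H := by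
    intro y
    obtain ⟨h, hH, he⟩ := hb ((γ⁻¹ : MulAut G) y)
    refine ⟨h, hH, fun x => ?_⟩
    have e1 : (gammaHom X G γ)⁻¹ (x, y) = (x, (γ⁻¹ : MulAut G) y) := by
      rw [← map_inv]; rfl
    rw [Perm.mul_apply, Perm.mul_apply, e1, he, gammaHom_apply]
    show (h x, γ ((γ⁻¹ : MulAut G) y)) = (h x, y)
    exact Prod.ext rfl (γ.apply_symm_apply y)
  have heq : gammaHom X G γ * (lamHom X G (Equiv.mulRight g) * b) * (gammaHom X G γ)⁻¹
      = (gammaHom X G γ * lamHom X G (Equiv.mulRight g) * (gammaHom X G γ)⁻¹)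
        * (gammaHom X G γ * b * (gammaHom X G γ)⁻¹) := by group
  rw [heq, hlam]
  exact ⟨Equiv.mulRight (γ g), ⟨γ g, rfl⟩, _, hbase, rfl⟩

lemma Mstep_le_normalizer {H M : Subgroup (Perm X)} (hMn : ∀ m ∈ M, m ∈ (Subgroup.normalizer (H : Set _)))
    {s : Perm (X × G)} (hs : s ∈ Mstep X G M) :
    s ∈ (Subgroup.normalizer ((wreath X G H (rightRegular G)) : Set (Perm (X × G)))) := by
  obtain ⟨m, hm, γ, rfl⟩ := hs
  have hmn := hMn m hm
  have hmn' := hMn m⁻¹ (M.inv_mem hm)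
  refine mem_normalizer_of_conj (fun w hw => ?_) (fun w hw => ?_)
  · have h1 := gamma_conj_wreath (H := H) γ hw
    have h2 := mstar_conj_wreath hmn h1
    have e : mstarHom X G m * (gammaHom X G γ * w * (gammaHom X G γ)⁻¹) * (mstarHom X G m)⁻¹
        = mstarHom X G m * gammaHom X G γ * w * (mstarHom X G m * gammaHom X G γ)⁻¹ := by
      rw [mul_inv_rev]; group
    rwa [e] at h2
  · have h1 := mstar_conj_wreath hmn' hw
    have h2 := gamma_conj_wreath (H := H) γ⁻¹ h1
    have e : gammaHom X G γ⁻¹ * (mstarHom X G m⁻¹ * w * (mstarHom X G m⁻¹)⁻¹)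
          * (gammaHom X G γ⁻¹)⁻¹
        = (mstarHom X G m * gammaHom X G γ)⁻¹ * w * (mstarHom X G m * gammaHom X G γ) := by
      rw [mul_inv_rev, map_inv, map_inv]; group
    rwa [e] at h2

end MstepNorm
section Decomp

variable {X : Type*} {G : Type*} [Group G]

lemma normalizer_decomp [Nontrivial G] [Nonempty X] {H M : Subgroup (Perm X)}
    (htrans : ∀ x x' : X, ∃ h ∈ H, h x = x')
    (hMn : ∀ m ∈ M, m ∈ (Subgroup.normalizer (H : Set _)))
    (hMW : ∀ β : Perm X, β ∈ (Subgroup.normalizer (H : Set _)) → ∃ m ∈ M, m⁻¹ * β ∈ H)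
    {α : Perm (X × G)} (hα : α ∈ (Subgroup.normalizer ((wreath X G H (rightRegular G)) : Set (Perm (X × G))))) :
    ∃ m ∈ M, ∃ γ : MulAut G,
      (mstarHom X G m * gammaHom X G γ)⁻¹ * α ∈ wreath X G H (rightRegular G) := by
  obtain ⟨x0⟩ := ‹Nonempty X›
  have hαinv : α⁻¹ ∈ (Subgroup.normalizer ((wreath X G H (rightRegular G)) : Set (Perm (X × G)))) :=
    (Subgroup.normalizer ((wreath X G H (rightRegular G)) : Set (Perm (X × G)))).inv_mem hα
  have hsnd := snd_indep htrans hα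
  have hsnd' := snd_indep htrans hαinv
  set σf : G → G := fun y => (α (x0, y)).2 with hσf
  set σg : G → G := fun y => (α⁻¹ (x0, y)).2 with hσg
  have hli : ∀ y, σg (σf y) = y := by
    intro y
    have h1 : (α⁻¹ (x0, σf y)).2 = (α⁻¹ ((α (x0, y)).1, σf y)).2 :=
      hsnd' x0 (α (x0, y)).1 (σf y)
    have h2 : ((α (x0, y)).1, σf y) = α (x0, y) := rfl
    show (α⁻¹ (x0, σf y)).2 = y
    rw [h1, h2, Perm.inv_apply_self]
  have hri : ∀ y, σf (σg y) = y := by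
    intro y
    have h1 : (α (x0, σg y)).2 = (α ((α⁻¹ (x0, y)).1, σg y)).2 :=
      hsnd x0 (α⁻¹ (x0, y)).1 (σg y)
    have h2 : ((α⁻¹ (x0, y)).1, σg y) = α⁻¹ (x0, y) := rfl
    show (α (x0, σg y)).2 = y
    rw [h1, h2, Perm.apply_inv_self]
  set σ : Perm G := ⟨σf, σg, hli, hri⟩ with hσdef
  have hσ : ∀ (x : X) (y : G), (α (x, y)).2 = σ y := fun x y => hsnd x x0 y
  have hσ' : ∀ (x : X) (y : G), (α⁻¹ (x, y)).2 = σ.symm y := fun x y => hsnd' x x0 y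
  have Fli : ∀ y x, (α⁻¹ ((α (x, y)).1, σ y)).1 = x := by
    intro y x
    have h2 : ((α (x, y)).1, σ y) = α (x, y) := by
      rw [← hσ x y]
    rw [h2, Perm.inv_apply_self]
  have Fri : ∀ y x, (α ((α⁻¹ (x, σ y)).1, y)).1 = x := by
    intro y x
    have h2 : ((α⁻¹ (x, σ y)).1, y) = α⁻¹ (x, σ y) := by
      have h3 := hσ' x (σ y)
      rw [σ.symm_apply_apply] at h3
      exact Prod.ext rfl h3.symm
    rw [h2, Perm.apply_inv_self]
  set F : G → Perm X :=
    fun y => ⟨fun x => (α (x, y)).1, fun x => (α⁻¹ (x, σ y)).1, Fli y, Fri y⟩ with hFdef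
  have hF : ∀ x y, α (x, y) = (F y x, σ y) := fun x y => Prod.ext rfl (hσ x y)
  have hFinv : ∀ x y, α⁻¹ (x, σ y) = ((F y)⁻¹ x, y) := by
    intro x y
    refine Prod.ext rfl ?_
    have h3 := hσ' x (σ y)
    rw [σ.symm_apply_apply] at h3
    exact h3
  have hFn : ∀ y, F y ∈ (Subgroup.normalizer (H : Set _)) := by
    intro y
    have d1 : ∀ h ∈ H, F y * h * (F y)⁻¹ ∈ H :=
      conj_block_normalizes hα (F y) y (σ y) (fun x => hF x y)
    have d2 : ∀ h ∈ H, (F y)⁻¹ * h * F y ∈ H := by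
      have d3 := conj_block_normalizes hαinv ((F y)⁻¹) (σ y) y (fun x => hFinv x y)
      intro h hh
      have h2 := d3 h hh
      rwa [inv_inv] at h2
    exact mem_normalizer_of_conj d1 d2
  have hlamconj : ∀ g : G, ∃ g' : G,
      (∀ y, σ (y * g) = σ y * g') ∧ ∀ y, F (y * g) * (F y)⁻¹ ∈ H := by
    intro g
    have hc := (Subgroup.mem_normalizer_iff.mp hα (lamHom X G (Equiv.mulRight g))).mp
      (lam_mem_wreath _ ⟨g, rfl⟩)
    obtain ⟨k, hk, b, hb, hceq⟩ := hc
    obtain ⟨g', rfl⟩ := mem_rightRegular_iff.mp hk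
    have key : ∀ y : G, ∃ h ∈ H, ∀ x : X,
        (F (y * g) x, σ (y * g)) = (h (F y x), σ y * g') := by
      intro y
      obtain ⟨h, hH, he⟩ := hb (σ y)
      refine ⟨h, hH, fun x => ?_⟩
      have e1 : α⁻¹ (F y x, σ y) = (x, y) := by
        rw [hFinv]
        exact Prod.ext (Perm.inv_apply_self _ _) rfl
      have e2 : (α * lamHom X G (Equiv.mulRight g) * α⁻¹) (F y x, σ y)
          = (F (y * g) x, σ (y * g)) := by
        rw [Perm.mul_apply, Perm.mul_apply, e1, lamHom_apply, hF]
        simp only [Equiv.coe_mulRight]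
      have e3 : (lamHom X G (Equiv.mulRight g') * b) (F y x, σ y)
          = (h (F y x), σ y * g') := by
        rw [Perm.mul_apply, he, lamHom_apply]
        rfl
      rw [← e2, hceq, e3]
    refine ⟨g', fun y => ?_, fun y => ?_⟩
    · obtain ⟨h, hH, he⟩ := key y
      exact congrArg Prod.snd (he x0)
    · obtain ⟨h, hH, he⟩ := key y
      have hfun : F (y * g) * (F y)⁻¹ = h := by
        refine Equiv.ext fun x' => ?_
        have h4 := congrArg Prod.fst (he ((F y)⁻¹ x'))
        simp only at h4
        rw [Perm.apply_inv_self] at h4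
        rw [Perm.mul_apply]
        exact h4
      rw [hfun]
      exact hH
  obtain ⟨γ, a, hγa⟩ := normalizer_rightRegular (σ := σ) (fun g =>
    (hlamconj g).elim fun g' hg' => ⟨g', hg'.1⟩)
  obtain ⟨m, hm, hmF1⟩ := hMW (F 1) (hFn 1)
  have hFy : ∀ y, m⁻¹ * F y ∈ H := by
    intro y
    have h1 : F y * (F 1)⁻¹ ∈ H := by
      obtain ⟨g', hg', hFq⟩ := hlamconj y
      have h5 := hFq 1
      rwa [one_mul] at h5
    have h2 : m⁻¹ * (F y * (F 1)⁻¹) * m ∈ H :=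
      normalizer_conj_mem m (hMn m hm) _ h1
    have e : m⁻¹ * F y = (m⁻¹ * (F y * (F 1)⁻¹) * m) * (m⁻¹ * F 1) := by group
    rw [e]
    exact mul_mem h2 hmF1
  refine ⟨m, hm, γ, ?_⟩
  set c : G := (γ⁻¹ : MulAut G) a with hc
  set ω : Perm (X × G) := (mstarHom X G m * gammaHom X G γ)⁻¹ * α with hω
  have hωapp : ∀ x y, ω (x, y) = ((m⁻¹ * F y) x, y * c) := by
    intro x y
    have e0 : σ y = γ y * a := hγa y
    have e1 : (mstarHom X G m)⁻¹ (F y x, σ y) = (m⁻¹ (F y x), σ y) := by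
      rw [← map_inv]; rfl
    have e2 : (gammaHom X G γ)⁻¹ (m⁻¹ (F y x), σ y)
        = (m⁻¹ (F y x), (γ⁻¹ : MulAut G) (σ y)) := by
      rw [← map_inv]; rfl
    have e3 : (γ⁻¹ : MulAut G) (σ y) = y * c := by
      rw [e0, map_mul, hc]
      congr 1
      exact γ.symm_apply_apply y
    calc ω (x, y) = (gammaHom X G γ)⁻¹ ((mstarHom X G m)⁻¹ (α (x, y))) := by
          rw [hω, mul_inv_rev, Perm.mul_apply, Perm.mul_apply]
      _ = ((m⁻¹ * F y) x, y * c) := by rw [hF, e1, e2, e3]; rfl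
  refine ⟨Equiv.mulRight c, ⟨c, rfl⟩, lamHom X G (Equiv.mulRight c⁻¹) * ω, ?_, ?_⟩
  · intro y
    refine ⟨m⁻¹ * F y, hFy y, fun x => ?_⟩
    rw [Perm.mul_apply, hωapp, lamHom_apply]
    show ((m⁻¹ * F y) x, y * c * c⁻¹) = ((m⁻¹ * F y) x, y)
    rw [mul_inv_cancel_right]
  · have h6 : lamHom X G (Equiv.mulRight c) * lamHom X G (Equiv.mulRight c⁻¹) = 1 := by
      rw [← map_mul]
      have h7 : Equiv.mulRight c * Equiv.mulRight c⁻¹ = (1 : Perm G) := by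
        refine Equiv.ext fun z => ?_
        show z * c⁻¹ * c = z
        rw [inv_mul_cancel_right]
      rw [h7, map_one]
    calc ω = (lamHom X G (Equiv.mulRight c) * lamHom X G (Equiv.mulRight c⁻¹)) * ω := by
          rw [h6, one_mul]
      _ = lamHom X G (Equiv.mulRight c) * (lamHom X G (Equiv.mulRight c⁻¹) * ω) := by group

end Decomp
section Assemble

variable {X : Type*} {G : Type*} [Group G]

lemma Mstep_inf [Nonempty X] {H M : Subgroup (Perm X)} (hinf : M ⊓ H = ⊥) :
    Mstep X G M ⊓ wreath X G H (rightRegular G) = ⊥ := by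
  obtain ⟨x0⟩ := ‹Nonempty X›
  rw [eq_bot_iff]
  intro f hf
  obtain ⟨hf1, hf2⟩ := Subgroup.mem_inf.mp hf
  obtain ⟨m, hm, γ, rfl⟩ := hf1
  obtain ⟨k, hk, b, hb, heq⟩ := hf2
  obtain ⟨g, rfl⟩ := mem_rightRegular_iff.mp hk
  have key : ∀ y : G, ∃ h ∈ H, ∀ x : X, (m x, γ y) = (h x, y * g) := by
    intro y
    obtain ⟨h, hH, he⟩ := hb y
    refine ⟨h, hH, fun x => ?_⟩
    have l : (mstarHom X G m * gammaHom X G γ) (x, y) = (m x, γ y) := rfl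
    have r : (lamHom X G (Equiv.mulRight g) * b) (x, y) = (h x, y * g) := by
      rw [Perm.mul_apply, he, lamHom_apply]
      rfl
    rw [← l, heq, r]
  have hg : g = 1 := by
    obtain ⟨h, hH, he⟩ := key 1
    have h1 := congrArg Prod.snd (he x0)
    simp only at h1
    rw [map_one, one_mul] at h1
    exact h1.symm
  have hγ : γ = 1 := by
    refine MulEquiv.ext fun y => ?_
    obtain ⟨h, hH, he⟩ := key y
    have h1 := congrArg Prod.snd (he x0)
    simp only at h1
    rw [hg, mul_one] at h1
    exact h1
  have hmH : m ∈ H := by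
    obtain ⟨h, hH, he⟩ := key 1
    have h1 : m = h := Equiv.ext fun x => congrArg Prod.fst (he x)
    rw [h1]
    exact hH
  have hm1 : m = 1 := by
    have h1 : m ∈ M ⊓ H := ⟨hm, hmH⟩
    rw [hinf] at h1
    exact Subgroup.mem_bot.mp h1
  rw [hm1, hγ, map_one, map_one, one_mul]
  exact Subgroup.one_mem _

lemma Mstep_iso [Nonempty X] (M : Subgroup (Perm X)) :
    Nonempty (Mstep X G M ≃* M × MulAut G) := by
  obtain ⟨x0⟩ := ‹Nonempty X›
  set φ : M × MulAut G →* Perm (X × G) :=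
    ((mstarHom X G).comp M.subtype).noncommCoprod (gammaHom X G)
      (fun m γ => (gamma_mstar_comm X G m γ).symm) with hφ
  have hφapp : ∀ p : M × MulAut G, φ p = mstarHom X G p.1 * gammaHom X G p.2 :=
    fun p => rfl
  have hinj : Function.Injective φ := by
    rw [injective_iff_map_eq_one]
    rintro ⟨m, γ⟩ h1
    have h2 : ∀ x y, ((m : Perm X) x, γ y) = (x, y) := by
      intro x y
      have h3 : φ (m, γ) (x, y) = (x, y) := by rw [h1]; rfl
      rw [hφapp] at h3
      exact h3
    have hm : m = 1 := by
      refine Subtype.ext (Equiv.ext fun x => ?_)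
      exact congrArg Prod.fst (h2 x 1)
    have hγ : γ = 1 := by
      refine MulEquiv.ext fun y => ?_
      exact congrArg Prod.snd (h2 x0 y)
    rw [hm, hγ]
    rfl
  have hrange : φ.range = Mstep X G M := by
    ext f
    constructor
    · rintro ⟨⟨m, γ⟩, rfl⟩
      exact ⟨m, m.2, γ, (hφapp (m, γ))⟩
    · rintro ⟨m, hm, γ, rfl⟩
      exact ⟨(⟨m, hm⟩, γ), rfl⟩
  exact ⟨(MulEquiv.subgroupCongr hrange.symm).trans (MonoidHom.ofInjective hinj).symm⟩

/-- `A × (Fin n → A) ≃* (Fin (n+1) → A)`. -/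
def consMulEquiv (A : Type*) [Group A] (n : ℕ) : (A × (Fin n → A)) ≃* (Fin (n + 1) → A) :=
  MulEquiv.mk' (Fin.consEquiv fun _ => A) (by
    intro p q
    funext i
    refine Fin.cases ?_ (fun j => ?_) i <;>
      simp [Fin.consEquiv_apply, Fin.cons_zero, Fin.cons_succ, Pi.mul_apply])

/-- A `MulEquiv` between any two trivial groups. -/
def trivMulEquiv (A B : Type*) [Group A] [Group B] [Subsingleton A] [Subsingleton B] :
    A ≃* B where
  toFun _ := 1
  invFun _ := 1
  left_inv _ := Subsingleton.elim _ _
  right_inv _ := Subsingleton.elim _ _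
  map_mul' _ _ := (one_mul 1).symm

lemma bot_subgroup_subsingleton {Gp : Type*} [Group Gp] :
    Subsingleton (⊥ : Subgroup Gp) :=
  ⟨fun a b => Subtype.ext ((Subgroup.mem_bot.mp a.2).trans (Subgroup.mem_bot.mp b.2).symm)⟩

lemma subsingleton_case {Z : Type*} [Subsingleton Z] (W : Subgroup (Perm Z)) :
    (∀ α : Perm Z, α ∈ (Subgroup.normalizer (W : Set _)) ↔ ∃ m ∈ (⊥ : Subgroup (Perm Z)), ∃ w ∈ W, α = m * w) ∧
    (⊥ : Subgroup (Perm Z)) ⊓ W = ⊥ := by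
  have hs : Subsingleton (Perm Z) := ⟨fun a b => Equiv.ext fun x => Subsingleton.elim _ _⟩
  refine ⟨fun α => ⟨fun _ => ⟨1, Subgroup.one_mem _, 1, W.one_mem, Subsingleton.elim _ _⟩,
    fun _ => ?_⟩, bot_inf_eq W⟩
  have h1 : α = 1 := Subsingleton.elim _ _
  rw [h1]
  exact Subgroup.one_mem _

lemma iterSpace_nonempty (G : Type*) [Group G] : ∀ n : ℕ, Nonempty (iterSpace G n)
  | 0 => ⟨PUnit.unit⟩
  | n + 1 => ⟨((iterSpace_nonempty G n).some, 1)⟩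

lemma iterSpace_subsingleton (G : Type*) [Group G] [Subsingleton G] :
    ∀ n : ℕ, Subsingleton (iterSpace G n)
  | 0 => inferInstanceAs (Subsingleton PUnit)
  | n + 1 => by
    have := iterSpace_subsingleton G n
    exact ⟨fun a b => Prod.ext (Subsingleton.elim _ _) (Subsingleton.elim _ _)⟩

end Assemble
section Main

lemma main_aux (G : Type*) [Group G] [Nontrivial G] (n : ℕ) :
    (∀ p q : iterSpace G n, ∃ w ∈ iterW G n, w p = q) ∧
    ∃ M : Subgroup (Perm (iterSpace G n)),
      (∀ α : Perm (iterSpace G n),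
        α ∈ (Subgroup.normalizer ((iterW G n) : Set (Perm (iterSpace G n)))) ↔ ∃ m ∈ M, ∃ w ∈ iterW G n, α = m * w) ∧
      M ⊓ iterW G n = ⊥ ∧
      Nonempty (M ≃* (Fin n → MulAut G)) := by
  induction n with
  | zero =>
    haveI : Subsingleton (iterSpace G 0) := inferInstanceAs (Subsingleton PUnit)
    haveI : Subsingleton (Fin 0 → MulAut G) := ⟨fun f g => funext fun i => i.elim0⟩
    haveI := bot_subgroup_subsingleton (Gp := Perm (iterSpace G 0))
    refine ⟨fun p q => ⟨1, Subgroup.one_mem _, Subsingleton.elim _ _⟩,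
      ⊥, (subsingleton_case _).1, (subsingleton_case _).2, ⟨trivMulEquiv _ _⟩⟩
  | succ n ih =>
    obtain ⟨htrans, M, hiff, hinf, ⟨iso⟩⟩ := ih
    haveI : Nonempty (iterSpace G n) := iterSpace_nonempty G n
    have hMn : ∀ m ∈ M, m ∈ (Subgroup.normalizer ((iterW G n) : Set (Perm (iterSpace G n)))) := fun m hm =>
      (hiff m).mpr ⟨m, hm, 1, Subgroup.one_mem _, (mul_one m).symm⟩
    have hMW : ∀ β ∈ (Subgroup.normalizer ((iterW G n) : Set (Perm (iterSpace G n)))), ∃ m ∈ M, m⁻¹ * β ∈ iterW G n := by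
      intro β hβ
      obtain ⟨m, hm, w, hw, rfl⟩ := (hiff β).mp hβ
      exact ⟨m, hm, by rwa [inv_mul_cancel_left]⟩
    refine ⟨wreath_trans htrans, Mstep (iterSpace G n) G M, fun α => ⟨?_, ?_⟩,
      Mstep_inf hinf, ?_⟩
    · intro hα
      obtain ⟨m, hm, γ, hω⟩ := normalizer_decomp htrans hMn hMW hα
      exact ⟨mstarHom _ G m * gammaHom _ G γ, ⟨m, hm, γ, rfl⟩, _, hω, (mul_inv_cancel_left _ α).symm⟩
    · rintro ⟨s, hs, w, hw, rfl⟩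
      exact mul_mem (Mstep_le_normalizer hMn hs) (Subgroup.le_normalizer hw)
    · obtain ⟨e⟩ := Mstep_iso (G := G) M
      exact ⟨e.trans ((iso.prodCongr (MulEquiv.refl (MulAut G))).trans
        (MulEquiv.prodComm.trans (consMulEquiv (MulAut G) n)))⟩

end Main

/-- **Theorem.** For every group `G` and every `n ∈ ℕ`, the normalizer of the iterated
wreath product `W(G,n)` in the symmetric group `Perm(Gⁿ)` is an internal semidirect
product `Mₙ ⋉ W(G,n)`, where `Mₙ ≅ Aut(G)ⁿ`. -/
theorem normalizer_iterW_eq_semidirect (G : Type*) [Group G] (n : ℕ) :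
    ∃ M : Subgroup (Perm (iterSpace G n)),
      (∀ α : Perm (iterSpace G n),
        α ∈ Subgroup.normalizer (iterW G n : Set (Perm (iterSpace G n))) ↔ ∃ m ∈ M, ∃ w ∈ iterW G n, α = m * w) ∧
      M ⊓ iterW G n = ⊥ ∧
      (∀ α ∈ Subgroup.normalizer (iterW G n : Set (Perm (iterSpace G n))), ∀ w ∈ iterW G n, α⁻¹ * w * α ∈ iterW G n) ∧
      Nonempty (M ≃* (Fin n → MulAut G)) := by
  rcases subsingleton_or_nontrivial G with hG | hG
  · haveI := iterSpace_subsingleton G n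
    haveI : Subsingleton (MulAut G) := ⟨fun a b => MulEquiv.ext fun x => Subsingleton.elim _ _⟩
    haveI : Subsingleton (Fin n → MulAut G) := ⟨fun f g => funext fun i => Subsingleton.elim _ _⟩
    haveI := bot_subgroup_subsingleton (Gp := Perm (iterSpace G n))
    exact ⟨⊥, (subsingleton_case _).1, (subsingleton_case _).2,
      fun α hα w hw => normalizer_conj_mem α hα w hw, ⟨trivMulEquiv _ _⟩⟩
  · obtain ⟨-, M, h1, h2, h3⟩ := main_aux G n
    exact ⟨M, h1, h2, fun α hα w hw => normalizer_conj_mem α hα w hw, h3⟩
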